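/- Cassini's identity for bicomplex k-Fibonacci quaternions: Q_{k,n−1}·Q_{k,n+1} − Q_{k,n}² = (−1)^n·(2(k²+2)·j + (k³+2k)·ij) for all n ≥ 1. -/
import Mathlib


open TensorProduct

noncomputable def kFib (k : ℝ) : ℕ → ℝ
  | 0 => 0
  | 1 => 1
  | n + 2 => k * kFib k (n + 1) + kFib k n

abbrev Bicomplex : Type := ℂ ⊗[ℝ] ℂ

noncomputable def bi : Bicomplex := (Complex.I : ℂ) ⊗ₜ[ℝ] (1 : ℂ)
noncomputable def bj : Bicomplex := (1 : ℂ) ⊗ₜ[ℝ] (Complex.I : ℂ)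

noncomputable def Q (k : ℝ) (n : ℕ) : Bicomplex :=
  algebraMap ℝ Bicomplex (kFib k n) + kFib k (n + 1) • bi
    + kFib k (n + 2) • bj + kFib k (n + 3) • (bi * bj)

lemma smul_eq' (r : ℝ) (x : Bicomplex) : r • x = algebraMap ℝ Bicomplex r * x :=
  Algebra.smul_def r x

lemma hbi : bi * bi = -1 := by
  simp [bi, Algebra.TensorProduct.tmul_mul_tmul, Complex.I_mul_I]
  rw [TensorProduct.neg_tmul, ← Algebra.TensorProduct.one_def]

lemma hbj : bj * bj = -1 := by
  simp [bj, Algebra.TensorProduct.tmul_mul_tmul, Complex.I_mul_I]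
  rw [TensorProduct.tmul_neg, ← Algebra.TensorProduct.one_def]

lemma kFib_rec (k : ℝ) (m : ℕ) :
    kFib k (m + 2) = k * kFib k (m + 1) + kFib k m := rfl

lemma Qrec (k : ℝ) (n : ℕ) :
    Q k (n + 2) = algebraMap ℝ Bicomplex k * Q k (n + 1) + Q k n := by
  have h2 : kFib k (n+2) = k * kFib k (n+1) + kFib k n := kFib_rec k n
  have h3 : kFib k (n+3) = k * kFib k (n+2) + kFib k (n+1) := kFib_rec k (n+1)
  have h4 : kFib k (n+4) = k * kFib k (n+3) + kFib k (n+2) := kFib_rec k (n+2)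
  have h5 : kFib k (n+5) = k * kFib k (n+4) + kFib k (n+3) := kFib_rec k (n+3)
  simp only [Q, show n+1+1 = n+2 from rfl, show n+2+1 = n+3 from rfl,
    show n+1+2 = n+3 from rfl, show n+2+2 = n+4 from rfl,
    show n+1+3 = n+4 from rfl, show n+2+3 = n+5 from rfl]
  rw [h5, h4, h3, h2]
  simp only [smul_eq', map_add, map_mul]
  ring

theorem stmt19 (k : ℝ) (hk : 0 < k) (n : ℕ) (hn : 1 ≤ n) :
    Q k (n - 1) * Q k (n + 1) - Q k n ^ 2 =
      ((-1 : ℝ) ^ n) • ((2 * (k ^ 2 + 2)) • bj + (k ^ 3 + 2 * k) • (bi * bj)) := by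
  induction n, hn using Nat.le_induction with
  | base =>
    have f0 : kFib k 0 = 0 := rfl
    have f1 : kFib k 1 = 1 := rfl
    have f2 : kFib k 2 = k := by
      rw [kFib_rec k 0, f0, f1]; ring
    have f3 : kFib k 3 = k^2 + 1 := by
      rw [kFib_rec k 1, f1, f2]; ring
    have f4 : kFib k 4 = k^3 + 2*k := by
      rw [kFib_rec k 2, f2, f3]; ring
    have f5 : kFib k 5 = k^4 + 3*k^2 + 1 := by
      rw [kFib_rec k 3, f3, f4]; ring
    show Q k 0 * Q k 2 - Q k 1 ^ 2 = _
    simp only [Q, show (0:ℕ)+1 = 1 from rfl, show (0:ℕ)+2 = 2 from rfl,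
      show (0:ℕ)+3 = 3 from rfl, show (1:ℕ)+1 = 2 from rfl,
      show (1:ℕ)+2 = 3 from rfl, show (1:ℕ)+3 = 4 from rfl,
      show (2:ℕ)+1 = 3 from rfl, show (2:ℕ)+2 = 4 from rfl,
      show (2:ℕ)+3 = 5 from rfl, f0, f1, f2, f3, f4, f5, pow_one]
    simp only [smul_eq', map_add, map_mul, map_pow, map_ofNat, map_one,
      map_zero, map_neg]
    set c : Bicomplex := algebraMap ℝ Bicomplex k with hc
    linear_combination (1 + (c^2 + 2) * bj + bj * bj) * hbi + (-(c * bi) - 2) * hbj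
  | succ n hn ih =>
    have h2 := Qrec k n
    have h1 : Q k (n + 1) = algebraMap ℝ Bicomplex k * Q k n + Q k (n - 1) := by
      have := Qrec k (n - 1)
      rwa [show n - 1 + 2 = n + 1 by omega, show n - 1 + 1 = n by omega] at this
    rw [show n + 1 - 1 = n by omega, show ((-1:ℝ))^(n+1) = -(-1)^n by ring,
      neg_smul]
    rw [smul_eq'] at ih ⊢
    linear_combination Q k n * h2 - Q k (n + 1) * h1 - ih
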